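/- Let {K_j}_{j ≥ 1} be a sequence of segments in ℝ² whose union K is compact, and let u := Σ_{j=1}^∞ 2^{-j} d(K_j, ·). Then u is not differentiable at any point of K; consequently the singular set of u equals exactly K. -/

import Mathlib

open Set Metric Filter Topology
set_option linter.unusedSectionVars false

variable {E : Type*} [NormedAddCommGroup E] [InnerProductSpace ℝ E]

lemma my_le_infDist {s : Set E} (hs : s.Nonempty) {x : E} {b : ℝ}
    (h : ∀ z ∈ s, b ≤ dist x z) : b ≤ infDist x s := by
  by_contra hlt
  push_neg at hlt
  obtain ⟨z, hz, hdz⟩ := (infDist_lt_iff hs).1 hlt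
  exact absurd (h z hz) (not_le.2 hdz)

lemma my_infDist_midpoint {C : Set E} (hC : Convex ℝ C) (hne : C.Nonempty) (y z : E) :
    2 * infDist (midpoint ℝ y z) C ≤ infDist y C + infDist z C := by
  refine le_of_forall_pos_le_add fun ε hε => ?_
  obtain ⟨a, ha, hya⟩ := (infDist_lt_iff hne).1
    (show infDist y C < infDist y C + ε/2 by linarith)
  obtain ⟨b, hb, hzb⟩ := (infDist_lt_iff hne).1
    (show infDist z C < infDist z C + ε/2 by linarith)
  have hmem : midpoint ℝ a b ∈ C := hC.segment_subset ha hb (midpoint_mem_segment a b)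
  have h1 : infDist (midpoint ℝ y z) C ≤ dist (midpoint ℝ y z) (midpoint ℝ a b) :=
    infDist_le_dist_of_mem hmem
  have h2 := dist_midpoint_midpoint_le y z a b
  linarith

lemma my_isCompact_segment (p q : E) : IsCompact (segment ℝ p q) := by
  rw [segment_eq_image ℝ p q]
  exact (isCompact_Icc).image (by continuity)

lemma my_infDist_perp {p q x : E} (v : E) (hx : x ∈ segment ℝ p q)
    (hv : ‖v‖ = 1) (hperp : (inner ℝ (q - p) v : ℝ) = 0) (t : ℝ) :
    infDist (x + t • v) (segment ℝ p q) = |t| := by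
  refine le_antisymm ?_ ?_
  · calc infDist (x + t • v) (segment ℝ p q) ≤ dist (x + t • v) x :=
          infDist_le_dist_of_mem hx
      _ = |t| := by rw [dist_eq_norm]; simp [norm_smul, hv]
  · refine my_le_infDist ⟨p, left_mem_segment ℝ p q⟩ fun z hz => ?_
    rw [segment_eq_image' ℝ p q] at hx hz
    obtain ⟨s, _, rfl⟩ := hx
    obtain ⟨c, _, rfl⟩ := hz
    have heq : p + s • (q - p) + t • v - (p + c • (q - p)) = t • v - (c - s) • (q - p) := by
      module
    rw [dist_eq_norm, heq]
    have hinner : (inner ℝ (t • v) ((c - s) • (q - p)) : ℝ) = 0 := by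
      rw [real_inner_smul_left, real_inner_smul_right, real_inner_comm, hperp]
      ring
    have hsq : ‖t • v - (c - s) • (q - p)‖ ^ 2 = t ^ 2 + ‖(c - s) • (q - p)‖ ^ 2 := by
      rw [norm_sub_sq_real, hinner, norm_smul, hv, Real.norm_eq_abs]
      rw [mul_one, sq_abs]
      ring
    have h1 : |t| = Real.sqrt (t ^ 2) := (Real.sqrt_sq_eq_abs t).symm
    have h2 : ‖t • v - (c - s) • (q - p)‖ =
        Real.sqrt (‖t • v - (c - s) • (q - p)‖ ^ 2) := (Real.sqrt_sq (norm_nonneg _)).symm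
    rw [h1, h2, hsq]
    refine Real.sqrt_le_sqrt (by nlinarith [sq_nonneg ‖(c - s) • (q - p)‖])

lemma my_exists_unit_perp (w : EuclideanSpace ℝ (Fin 2)) :
    ∃ v : EuclideanSpace ℝ (Fin 2), ‖v‖ = 1 ∧ (inner ℝ w v : ℝ) = 0 := by
  by_cases hw : w = 0
  · refine ⟨EuclideanSpace.single 0 1, ?_, ?_⟩
    · simp [EuclideanSpace.norm_single]
    · simp [hw]
  · have hwn : ‖w‖ ≠ 0 := norm_ne_zero_iff.2 hw
    set v0 : EuclideanSpace ℝ (Fin 2) := (WithLp.equiv 2 _).symm ![-w 1, w 0] with hv0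
    have hv0app0 : v0 0 = -w 1 := rfl
    have hv0app1 : v0 1 = w 0 := rfl
    have hnv0 : ‖v0‖ = ‖w‖ := by
      rw [EuclideanSpace.norm_eq, EuclideanSpace.norm_eq]
      rw [Fin.sum_univ_two, Fin.sum_univ_two, hv0app0, hv0app1, norm_neg]
      ring_nf
    have hinner : (inner ℝ w v0 : ℝ) = 0 := by
      rw [PiLp.inner_apply]
      rw [Fin.sum_univ_two]
      simp [hv0app0, hv0app1, RCLike.inner_apply]
      ring
    refine ⟨‖w‖⁻¹ • v0, ?_, ?_⟩
    · rw [norm_smul, hnv0]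
      simp [hwn]
    · rw [real_inner_smul_right, hinner, mul_zero]
lemma my_infDist_hasFDerivAt {C : Set E} (hC : Convex ℝ C) (hcomp : IsCompact C)
    (hne : C.Nonempty) {x : E} (hx : x ∉ C) :
    ∃ L : E →L[ℝ] ℝ, ‖L‖ ≤ 1 ∧ HasFDerivAt (fun y => infDist y C) L x := by
  obtain ⟨p, hp, hdist⟩ := hcomp.exists_infDist_eq_dist hne x
  set d : ℝ := infDist x C with hdef
  have hd : 0 < d := (hcomp.isClosed.notMem_iff_infDist_pos hne).1 hx
  have hxp : ‖x - p‖ = d := by rw [← dist_eq_norm, ← hdist]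
  -- projection inequality
  have hproj : ∀ z ∈ C, (inner ℝ (x - p) (z - p) : ℝ) ≤ 0 := by
    intro z hz
    by_contra hI
    push_neg at hI
    have hzp : (0:ℝ) < ‖z - p‖ := by
      rcases eq_or_ne z p with rfl | hne'
      · simp at hI
      · simpa using norm_pos_iff.2 (sub_ne_zero.2 hne')
    set I : ℝ := inner ℝ (x - p) (z - p) with hIdef
    set θ : ℝ := min 1 (I / ‖z - p‖ ^ 2) with hθdef
    have hθpos : 0 < θ := lt_min one_pos (by positivity)
    have hθ1 : θ ≤ 1 := min_le_left _ _
    have hθI : θ * ‖z - p‖ ^ 2 ≤ I := by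
      have := min_le_right 1 (I / ‖z - p‖ ^ 2)
      calc θ * ‖z - p‖ ^ 2 ≤ (I / ‖z - p‖ ^ 2) * ‖z - p‖ ^ 2 := by
            apply mul_le_mul_of_nonneg_right this (by positivity)
        _ = I := by field_simp
    have hmem : p + θ • (z - p) ∈ C := by
      have := hC hp hz (by linarith : (0:ℝ) ≤ 1 - θ) hθpos.le (by ring)
      convert this using 1
      module
    have hle : d ≤ dist x (p + θ • (z - p)) := infDist_le_dist_of_mem hmem
    have hexp : dist x (p + θ • (z - p)) ^ 2
        = ‖x - p‖ ^ 2 - 2 * θ * I + θ ^ 2 * ‖z - p‖ ^ 2 := by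
      rw [dist_eq_norm]
      have : x - (p + θ • (z - p)) = (x - p) - θ • (z - p) := by abel
      rw [this, norm_sub_sq_real, real_inner_smul_right, norm_smul, Real.norm_eq_abs,
        abs_of_pos hθpos]
      ring
    have hd2 : d ^ 2 ≤ dist x (p + θ • (z - p)) ^ 2 := by
      apply pow_le_pow_left₀ hd.le hle
    rw [hexp, hxp] at hd2
    nlinarith
  set w : E := d⁻¹ • (x - p) with hwdef
  have hw : ‖w‖ = 1 := by
    rw [hwdef, norm_smul, Real.norm_eq_abs, abs_of_pos (by positivity), hxp]
    field_simp
  have hxpw : x - p = d • w := by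
    rw [hwdef, smul_smul]
    rw [mul_inv_cancel₀ hd.ne', one_smul]
  have hwz : ∀ z ∈ C, (inner ℝ w (z - p) : ℝ) ≤ 0 := by
    intro z hz
    rw [hwdef, real_inner_smul_left]
    exact mul_nonpos_of_nonneg_of_nonpos (by positivity) (hproj z hz)
  have hwx : (inner ℝ w (x - p) : ℝ) = d := by
    rw [hwdef, real_inner_smul_left, real_inner_self_eq_norm_sq, hxp]
    field_simp
  have hlow : ∀ y : E, (inner ℝ w (y - p) : ℝ) ≤ infDist y C := by
    intro y
    refine my_le_infDist hne fun z hz => ?_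
    have hsplit : y - p = (y - z) + (z - p) := by abel
    calc (inner ℝ w (y - p) : ℝ) = inner ℝ w (y - z) + inner ℝ w (z - p) := by
          rw [hsplit, inner_add_right]
      _ ≤ inner ℝ w (y - z) := by linarith [hwz z hz]
      _ ≤ ‖w‖ * ‖y - z‖ := real_inner_le_norm w (y - z)
      _ = dist y z := by rw [hw, one_mul, dist_eq_norm]
  have hup : ∀ y : E, infDist y C ≤ ‖y - p‖ := fun y => by
    rw [← dist_eq_norm]; exact infDist_le_dist_of_mem hp
  refine ⟨innerSL ℝ w, by rw [innerSL_apply_norm, hw], ?_⟩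
  rw [hasFDerivAt_iff_isLittleO_nhds_zero]
  rw [Asymptotics.isLittleO_iff]
  intro c hc
  have hball : Metric.ball (0:E) (min (d/2) (c*d)) ∈ 𝓝 (0:E) :=
    ball_mem_nhds _ (lt_min (by linarith) (mul_pos hc hd))
  filter_upwards [hball] with h hh
  rw [mem_ball_zero_iff] at hh
  have hh1 : ‖h‖ < d / 2 := lt_of_lt_of_le hh (min_le_left _ _)
  have hh2 : ‖h‖ < c * d := lt_of_lt_of_le hh (min_le_right _ _)
  set y : E := x + h with hydef
  set a : ℝ := ‖y - p‖ with hadef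
  set b : ℝ := inner ℝ w (y - p) with hbdef
  have hba : b ≤ a := by
    calc b ≤ ‖w‖ * ‖y - p‖ := real_inner_le_norm _ _
      _ = a := by rw [hw, one_mul]
  have hyp : y - p = (x - p) + h := by rw [hydef]; abel
  have hbd : b = d + inner ℝ w h := by rw [hbdef, hyp, inner_add_right, hwx]
  have hwh : |(inner ℝ w h : ℝ)| ≤ ‖h‖ := by
    have := abs_real_inner_le_norm w h
    rwa [hw, one_mul] at this
  have hblow : d / 2 ≤ b := by
    have : -‖h‖ ≤ (inner ℝ w h : ℝ) := neg_le_of_abs_le hwh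
    rw [hbd]; linarith
  have hasq : a ^ 2 = d ^ 2 + 2 * d * inner ℝ w h + ‖h‖ ^ 2 := by
    rw [hadef, hyp, hxpw, norm_add_sq_real, real_inner_smul_left, norm_smul,
      Real.norm_eq_abs, abs_of_pos hd, hw]
    ring
  have hab2 : (a - b) * (a + b) ≤ ‖h‖ ^ 2 := by
    have hbsq : b ^ 2 = d ^ 2 + 2 * d * inner ℝ w h + (inner ℝ w h : ℝ) ^ 2 := by
      rw [hbd]; ring
    have : (a - b) * (a + b) = a ^ 2 - b ^ 2 := by ring
    rw [this, hasq, hbsq]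
    nlinarith [sq_nonneg ((inner ℝ w h : ℝ))]
  have habd : d ≤ a + b := by linarith
  have hab : a - b ≤ c * ‖h‖ := by
    have h1 : (a - b) * d ≤ ‖h‖ * ‖h‖ := by nlinarith
    have h2 : ‖h‖ * ‖h‖ ≤ (c * d) * ‖h‖ := mul_le_mul_of_nonneg_right hh2.le (norm_nonneg h)
    have h3 : (a - b) * d ≤ (c * ‖h‖) * d := by nlinarith
    exact le_of_mul_le_mul_right (by linarith) hd
  have hval : infDist y C - d - (inner ℝ w h : ℝ) = infDist y C - b := by rw [hbd]; ring
  have hlowy : b ≤ infDist y C := hlow y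
  have hupy : infDist y C ≤ a := hup y
  have : |infDist y C - b| ≤ a - b := by
    rw [abs_le]; constructor <;> linarith
  calc ‖infDist (x + h) C - infDist x C - (innerSL ℝ w) h‖
      = |infDist y C - d - (inner ℝ w h : ℝ)| := by
        rw [Real.norm_eq_abs]; rfl
    _ = |infDist y C - b| := by rw [hval]
    _ ≤ a - b := this
    _ ≤ c * ‖h‖ := hab

/-- For a sequence of segments `K_j ⊆ ℝ²` with compact union `K`, the function
`u = Σ_j 2^{-j} d(K_j, ·)` is not differentiable at any point of `K`; consequently its
singular set (the set of non-differentiability points) equals exactly `K`. -/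
theorem stmt_13 (K : ℕ → Set (EuclideanSpace ℝ (Fin 2)))
    (hseg : ∀ j, ∃ p q : EuclideanSpace ℝ (Fin 2), K j = segment ℝ p q)
    (hcomp : IsCompact (⋃ j, K j))
    (u : EuclideanSpace ℝ (Fin 2) → ℝ)
    (hu : u = fun x => ∑' j : ℕ, ((1 : ℝ) / 2) ^ (j + 1) * infDist x (K j)) :
    (∀ x ∈ ⋃ j, K j, ¬ DifferentiableAt ℝ u x) ∧
    {x | ¬ DifferentiableAt ℝ u x} = ⋃ j, K j := by
  subst hu
  set a : ℕ → ℝ := fun n => ((1 : ℝ) / 2) ^ (n + 1) with ha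
  have hapos : ∀ n, 0 < a n := fun n => by positivity
  have hKcomp : ∀ j, IsCompact (K j) := by
    intro j; obtain ⟨p, q, hpq⟩ := hseg j; rw [hpq]; exact my_isCompact_segment p q
  have hKconv : ∀ j, Convex ℝ (K j) := by
    intro j; obtain ⟨p, q, hpq⟩ := hseg j; rw [hpq]; exact convex_segment p q
  have hKne : ∀ j, (K j).Nonempty := by
    intro j; obtain ⟨p, q, hpq⟩ := hseg j; rw [hpq]; exact ⟨p, left_mem_segment ℝ p q⟩
  obtain ⟨R, hR⟩ := hcomp.isBounded.subset_closedBall 0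
  have hbound : ∀ (j : ℕ) (y : EuclideanSpace ℝ (Fin 2)), infDist y (K j) ≤ ‖y‖ + R := by
    intro j y
    obtain ⟨z, hz⟩ := hKne j
    have hzR : ‖z‖ ≤ R := by
      have := hR (mem_iUnion.2 ⟨j, hz⟩)
      simpa [mem_closedBall, dist_zero_right] using this
    calc infDist y (K j) ≤ dist y z := infDist_le_dist_of_mem hz
      _ ≤ ‖y‖ + ‖z‖ := by rw [dist_eq_norm]; exact norm_sub_le y z
      _ ≤ ‖y‖ + R := by linarith
  have hsa : Summable a := by
    have := (summable_geometric_of_lt_one (by norm_num : (0:ℝ) ≤ 1/2)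
      (by norm_num : (1:ℝ)/2 < 1)).mul_left ((1:ℝ)/2)
    refine this.congr fun n => ?_
    simp [ha, pow_succ, mul_comm]
  have hsummable : ∀ y : EuclideanSpace ℝ (Fin 2), Summable (fun n => a n * infDist y (K n)) := by
    intro y
    refine Summable.of_nonneg_of_le (fun n => ?_) (fun n => ?_) (hsa.mul_right (‖y‖ + R))
    · exact mul_nonneg (hapos n).le infDist_nonneg
    · exact mul_le_mul_of_nonneg_left (hbound n y) (hapos n).le
  have notDiff : ∀ x ∈ ⋃ j, K j,
      ¬ DifferentiableAt ℝ (fun x => ∑' j : ℕ, a j * infDist x (K j)) x := by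
    intro x hx hdiff
    obtain ⟨j0, hj0⟩ := mem_iUnion.1 hx
    obtain ⟨p, q, hpq⟩ := hseg j0
    obtain ⟨v, hv1, hvp⟩ := my_exists_unit_perp (q - p)
    -- key lower bound on the second difference
    have key : ∀ t : ℝ, 2 * (a j0 * |t|) ≤
        (∑' n, a n * infDist (x + t • v) (K n)) +
        (∑' n, a n * infDist (x - t • v) (K n)) -
        2 * ∑' n, a n * infDist x (K n) := by
      intro t
      have hy2 : x - t • v = x + (-t) • v := by module
      have hmid : midpoint ℝ (x + t • v) (x - t • v) = x := by
        rw [midpoint_eq_smul_add]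
        have h2 : x + t • v + (x - t • v) = (2 : ℝ) • x := by module
        rw [h2, smul_smul]
        norm_num
      have S1 := hsummable (x + t • v)
      have S2 := hsummable (x - t • v)
      have S0 := hsummable x
      have hsum_g : Summable (fun n => a n * infDist (x + t • v) (K n)
          + a n * infDist (x - t • v) (K n) - 2 * (a n * infDist x (K n))) :=
        (S1.add S2).sub (S0.mul_left 2)
      have htsum : (∑' n, a n * infDist (x + t • v) (K n)) +
          (∑' n, a n * infDist (x - t • v) (K n)) -
          2 * ∑' n, a n * infDist x (K n)
          = ∑' n, (a n * infDist (x + t • v) (K n)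
            + a n * infDist (x - t • v) (K n) - 2 * (a n * infDist x (K n))) := by
        rw [Summable.tsum_sub (S1.add S2) (S0.mul_left 2), Summable.tsum_add S1 S2, tsum_mul_left]
      rw [htsum]
      have hterm : a j0 * infDist (x + t • v) (K j0)
          + a j0 * infDist (x - t • v) (K j0) - 2 * (a j0 * infDist x (K j0))
          = 2 * (a j0 * |t|) := by
        have hxseg : x ∈ segment ℝ p q := hpq ▸ hj0
        have h1 : infDist (x + t • v) (K j0) = |t| := by
          rw [hpq]; exact my_infDist_perp v hxseg hv1 hvp t
        have h2 : infDist (x - t • v) (K j0) = |t| := by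
          rw [hy2, hpq, my_infDist_perp v hxseg hv1 hvp (-t), abs_neg]
        have h0 : infDist x (K j0) = 0 := infDist_zero_of_mem hj0
        rw [h1, h2, h0]; ring
      rw [← hterm]
      refine Summable.le_tsum hsum_g j0 fun n _ => ?_
      have hmj := my_infDist_midpoint (hKconv n) (hKne n) (x + t • v) (x - t • v)
      rw [hmid] at hmj
      nlinarith [(hapos n).le, hmj]
    -- differentiability along the line gives a contradiction
    set c : ℝ := fderiv ℝ (fun x => ∑' j : ℕ, a j * infDist x (K j)) x v with hc
    have h0v : x + (0:ℝ) • v = x := by simp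
    have hline1 : HasDerivAt (fun t : ℝ => x + t • v) v 0 := by
      simpa using ((hasDerivAt_id (0:ℝ)).smul_const v).const_add x
    have hline2 : HasDerivAt (fun t : ℝ => x - t • v) (-v) 0 := by
      simpa using ((hasDerivAt_id (0:ℝ)).smul_const v).const_sub x
    have hF : HasFDerivAt (fun x => ∑' j : ℕ, a j * infDist x (K j))
        (fderiv ℝ (fun x => ∑' j : ℕ, a j * infDist x (K j)) x) (x + (0:ℝ) • v) := by
      rw [h0v]; exact hdiff.hasFDerivAt
    have hF' : HasFDerivAt (fun x => ∑' j : ℕ, a j * infDist x (K j))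
        (fderiv ℝ (fun x => ∑' j : ℕ, a j * infDist x (K j)) x) (x - (0:ℝ) • v) := by
      simpa using hdiff.hasFDerivAt
    have hφ : HasDerivAt (fun t : ℝ => ∑' n, a n * infDist (x + t • v) (K n)) c 0 := by
      exact hF.comp_hasDerivAt 0 hline1
    have hψ : HasDerivAt (fun t : ℝ => ∑' n, a n * infDist (x - t • v) (K n)) (-c) 0 := by
      have := hF'.comp_hasDerivAt 0 hline2
      rw [map_neg] at this
      exact this
    have ho1 := hasDerivAt_iff_isLittleO.1 hφ
    have ho2 := hasDerivAt_iff_isLittleO.1 hψ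
    simp only [sub_zero, smul_eq_mul, zero_smul, add_zero, sub_zero] at ho1 ho2
    have ho := ho1.add ho2
    rw [Asymptotics.isLittleO_iff] at ho
    have hev := ho (show (0:ℝ) < a j0 from hapos j0)
    have hev2 : ∀ᶠ t in 𝓝 (0:ℝ), t = 0 := by
      filter_upwards [hev] with t ht
      by_contra htne
      have hkey := key t
      have h00 : x + (0:ℝ) • v = x := by simp
      have h00' : x - (0:ℝ) • v = x := by simp
      set A := ∑' n, a n * infDist (x + t • v) (K n)
      set B := ∑' n, a n * infDist (x - t • v) (K n)
      set D := ∑' n, a n * infDist x (K n)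
      have hAB : A + B - 2 * D ≥ 2 * (a j0 * |t|) := hkey
      have hexpr : A - D - t * c + (B - D - t * -c) = A + B - 2 * D := by ring
      have hnorm : ‖A - D - t * c + (B - D - t * -c)‖ ≤ a j0 * ‖t‖ := by
        have := ht
        simpa [h00, h00'] using this
      rw [hexpr, Real.norm_eq_abs, Real.norm_eq_abs] at hnorm
      have habs : A + B - 2 * D ≤ a j0 * |t| := le_trans (le_abs_self _) hnorm
      have htpos : 0 < |t| := abs_pos.2 htne
      nlinarith [hapos j0]
    have h3 : ∀ᶠ t in 𝓝[≠] (0:ℝ), t = (0:ℝ) := hev2.filter_mono nhdsWithin_le_nhds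
    have h4 : ∀ᶠ t in 𝓝[≠] (0:ℝ), t ≠ (0:ℝ) := eventually_mem_nhdsWithin
    obtain ⟨t, ht1, ht2⟩ := (h3.and h4).exists
    exact ht2 ht1
  have Diff : ∀ x, x ∉ ⋃ j, K j →
      DifferentiableAt ℝ (fun x => ∑' j : ℕ, a j * infDist x (K j)) x := by
    intro x hx
    have hopen : IsOpen (⋃ j, K j)ᶜ := hcomp.isClosed.isOpen_compl
    obtain ⟨ε, hε, hball⟩ := Metric.isOpen_iff.1 hopen x hx
    set f' : ℕ → EuclideanSpace ℝ (Fin 2) → (EuclideanSpace ℝ (Fin 2) →L[ℝ] ℝ) :=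
      fun n y => a n • fderiv ℝ (fun z => infDist z (K n)) y with hf'def
    have hf : ∀ (n : ℕ) (y : EuclideanSpace ℝ (Fin 2)), y ∈ ball x ε →
        HasFDerivAt (fun z => a n * infDist z (K n)) (f' n y) y := by
      intro n y hy
      have hyn : y ∉ K n := fun hmem => hball hy (mem_iUnion.2 ⟨n, hmem⟩)
      obtain ⟨L, hL1, hL2⟩ := my_infDist_hasFDerivAt (hKconv n) (hKcomp n) (hKne n) hyn
      have hfd : fderiv ℝ (fun z => infDist z (K n)) y = L := hL2.fderiv
      show HasFDerivAt (fun z => a n * infDist z (K n))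
        (a n • fderiv ℝ (fun z => infDist z (K n)) y) y
      rw [hfd]
      exact hL2.const_mul (a n)
    have hf' : ∀ (n : ℕ) (y : EuclideanSpace ℝ (Fin 2)), y ∈ ball x ε → ‖f' n y‖ ≤ a n := by
      intro n y hy
      have hyn : y ∉ K n := fun hmem => hball hy (mem_iUnion.2 ⟨n, hmem⟩)
      obtain ⟨L, hL1, hL2⟩ := my_infDist_hasFDerivAt (hKconv n) (hKcomp n) (hKne n) hyn
      have hfd : fderiv ℝ (fun z => infDist z (K n)) y = L := hL2.fderiv
      show ‖a n • fderiv ℝ (fun z => infDist z (K n)) y‖ ≤ a n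
      rw [hfd, norm_smul, Real.norm_eq_abs, abs_of_pos (hapos n)]
      calc a n * ‖L‖ ≤ a n * 1 := mul_le_mul_of_nonneg_left hL1 (hapos n).le
        _ = a n := mul_one _
    have := hasFDerivAt_tsum_of_isPreconnected hsa isOpen_ball
      (convex_ball x ε).isPreconnected hf hf' (mem_ball_self hε)
      (hsummable x) (mem_ball_self hε)
    exact this.differentiableAt
  refine ⟨notDiff, ?_⟩
  ext y
  simp only [mem_setOf_eq]
  constructor
  · intro h
    by_contra hy
    exact h (Diff y hy)
  · intro hy
    exact notDiff y hy
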